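/- Let a ≥ c₃ > 0 and τ ~ Exp(1/h) with 0 < h < π/12. Then the probability that a·τ lies outside all intervals [kπ − 3h, kπ + 3h] (k = 0,1,2,…), i.e. P(∪_k {|aτ − kπ| ≤ 3h})ᶜ, equals (e^{−3/a} − e^{3/a − π/(ha)})/(1 − e^{−π/(ha)}), and this quantity is bounded below by e^{−3/c₃}/2. -/

import Mathlib

open Real MeasureTheory ProbabilityTheory Set

lemma my_measure_union_null {α : Type*} [MeasurableSpace α] {μ : Measure α} {s t : Set α}
    (ht : μ t = 0) : μ (s ∪ t) = μ s :=
  le_antisymm ((measure_union_le s t).trans (by simp [ht]))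
    (measure_mono Set.subset_union_left)

lemma expMeasure_Iic {r x : ℝ} (hr : 0 < r) (hx : 0 ≤ x) :
    expMeasure r (Set.Iic x) = ENNReal.ofReal (1 - Real.exp (-(r * x))) := by
  rw [expMeasure, gammaMeasure, withDensity_apply _ measurableSet_Iic]
  have h1 : ∫⁻ y in Set.Iic x, exponentialPDF r y
      = ENNReal.ofReal (if 0 ≤ x then 1 - Real.exp (-(r * x)) else 0) :=
    lintegral_exponentialPDF_eq_antiDeriv hr x
  rw [if_pos hx] at h1
  exact h1

lemma expMeasure_Iio_zero (r : ℝ) : expMeasure r (Set.Iio 0) = 0 := by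
  rw [expMeasure, gammaMeasure, withDensity_apply _ measurableSet_Iio]
  exact lintegral_gammaPDF_of_nonpos le_rfl

lemma expMeasure_singleton (r x : ℝ) : expMeasure r {x} = 0 :=
  (withDensity_absolutelyContinuous _ _) (measure_singleton x)

lemma expMeasure_Ioo {r l u : ℝ} (hr : 0 < r) (hl : 0 ≤ l) (hlu : l < u) :
    expMeasure r (Set.Ioo l u)
      = ENNReal.ofReal (Real.exp (-(r * l)) - Real.exp (-(r * u))) := by
  have hu : (0:ℝ) ≤ u := hl.trans hlu.le
  have hIoc : expMeasure r (Set.Ioc l u)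
      = expMeasure r (Set.Iic u) - expMeasure r (Set.Iic l) := by
    rw [← Set.Iic_sdiff_Iic,
      measure_diff (Set.Iic_subset_Iic.2 hlu.le) measurableSet_Iic.nullMeasurableSet]
    rw [expMeasure_Iic hr hl]
    exact ENNReal.ofReal_ne_top
  have hIooIoc : expMeasure r (Set.Ioo l u) = expMeasure r (Set.Ioc l u) := by
    rw [← Set.Ioo_union_right hlu, my_measure_union_null (expMeasure_singleton r u)]
  have h1 : 0 ≤ 1 - Real.exp (-(r * l)) := by
    simp only [sub_nonneg, Real.exp_le_one_iff, Left.neg_nonpos_iff]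
    positivity
  rw [hIooIoc, hIoc, expMeasure_Iic hr hl, expMeasure_Iic hr hu,
    ← ENNReal.ofReal_sub _ h1]
  congr 1
  ring

set_option maxHeartbeats 1000000 in
theorem exp_avoid_multiples_pi (a c₃ h : ℝ) (hc₃ : 0 < c₃) (ha : c₃ ≤ a)
    (hh : 0 < h) (hhπ : h < Real.pi / 12) :
    expMeasure (1 / h) (⋃ k : ℕ, {t : ℝ | |a * t - k * Real.pi| ≤ 3 * h})ᶜ
      = ENNReal.ofReal
          ((Real.exp (-3 / a) - Real.exp (3 / a - Real.pi / (h * a))) /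
            (1 - Real.exp (-Real.pi / (h * a)))) ∧
    ENNReal.ofReal (Real.exp (-3 / c₃) / 2) ≤
      expMeasure (1 / h) (⋃ k : ℕ, {t : ℝ | |a * t - k * Real.pi| ≤ 3 * h})ᶜ := by
  have ha0 : 0 < a := hc₃.trans_le ha
  have hπ : 0 < Real.pi := Real.pi_pos
  have h6 : 6 * h < Real.pi := by
    have := Real.pi_pos
    nlinarith
  set l : ℕ → ℝ := fun k => (k * Real.pi + 3 * h) / a with hl
  set u : ℕ → ℝ := fun k => ((k + 1) * Real.pi - 3 * h) / a with hu
  set S : Set ℝ := ⋃ k : ℕ, {t : ℝ | |a * t - k * Real.pi| ≤ 3 * h} with hS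
  have hlu : ∀ k, l k < u k := by
    intro k
    simp only [hl, hu, div_lt_div_iff₀ ha0 ha0]
    nlinarith [mul_pos (show (0:ℝ) < Real.pi - 6 * h by linarith) ha0]
  -- set decomposition
  have hset : Sᶜ = (⋃ k : ℕ, Set.Ioo (l k) (u k)) ∪ (Sᶜ ∩ Set.Iio 0) := by
    ext t
    simp only [hS, Set.mem_compl_iff, Set.mem_iUnion, Set.mem_setOf_eq, not_exists,
      Set.mem_union, Set.mem_inter_iff, Set.mem_Ioo, Set.mem_Iio]
    constructor
    · intro ht
      rcases lt_or_ge t 0 with h0 | h0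
      · exact Or.inr ⟨ht, h0⟩
      · left
        set x := a * t with hx
        have hx0 : 0 ≤ x := by positivity
        set k := ⌊x / Real.pi⌋₊ with hk
        have hk1 : (k : ℝ) * Real.pi ≤ x := by
          have := Nat.floor_le (a := x / Real.pi) (by positivity)
          calc (k:ℝ) * Real.pi ≤ x / Real.pi * Real.pi :=
                mul_le_mul_of_nonneg_right this hπ.le
            _ = x := by field_simp
        have hk2 : x < ((k : ℝ) + 1) * Real.pi := by
          have := Nat.lt_floor_add_one (x / Real.pi)
          calc x = x / Real.pi * Real.pi := by field_simp
            _ < ((k:ℝ) + 1) * Real.pi := mul_lt_mul_of_pos_right this hπ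
        refine ⟨k, ?_, ?_⟩
        · have h2 := ht k
          rw [abs_le, not_and_or] at h2
          simp only [hl, div_lt_iff₀ ha0]
          rcases h2 with h1 | h1 <;> push_neg at h1 <;> rw [hx] at h1 <;> nlinarith
        · have h2 := ht (k + 1)
          rw [abs_le, not_and_or] at h2
          simp only [hu, lt_div_iff₀ ha0]
          rcases h2 with h1 | h1 <;> push_neg at h1 <;> rw [hx] at h1 <;>
            push_cast at h1 <;> nlinarith
    · rintro (⟨k, hk1, hk2⟩ | ⟨ht, _⟩)
      · intro j hj
        simp only [hl, div_lt_iff₀ ha0] at hk1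
        simp only [hu, lt_div_iff₀ ha0] at hk2
        rw [abs_le] at hj
        rcases le_or_gt j k with hjk | hjk
        · have : (j : ℝ) * Real.pi ≤ (k : ℝ) * Real.pi :=
            mul_le_mul_of_nonneg_right (by exact_mod_cast hjk) hπ.le
          linarith
        · have : ((k : ℝ) + 1) * Real.pi ≤ (j : ℝ) * Real.pi := by
            apply mul_le_mul_of_nonneg_right _ hπ.le
            exact_mod_cast hjk
          linarith
      · exact ht
  have hnull : expMeasure (1/h) (Sᶜ ∩ Set.Iio 0) = 0 :=
    measure_mono_null Set.inter_subset_right (expMeasure_Iio_zero _)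
  have hdisj : Pairwise (Function.onFun Disjoint fun k => Set.Ioo (l k) (u k)) := by
    have key : ∀ i j : ℕ, i < j → Disjoint (Set.Ioo (l i) (u i)) (Set.Ioo (l j) (u j)) := by
      intro i j hij
      apply Set.disjoint_left.2
      rintro t ⟨_, ht2⟩ ⟨ht3, _⟩
      have hui : u i ≤ l j := by
        simp only [hu, hl, div_le_div_iff₀ ha0 ha0]
        have hij' : ((i:ℝ) + 1) ≤ (j:ℝ) := by exact_mod_cast hij
        have hm : ((i:ℝ) + 1) * Real.pi ≤ (j:ℝ) * Real.pi :=
          mul_le_mul_of_nonneg_right hij' hπ.le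
        nlinarith [mul_le_mul_of_nonneg_right hm ha0.le, mul_pos hh ha0]
      linarith
    intro i j hij
    rcases hij.lt_or_gt with h' | h'
    · exact key i j h'
    · exact (key j i h').symm
  have hr : (0:ℝ) < 1 / h := by positivity
  set q : ℝ := Real.exp (-Real.pi / (h * a)) with hq
  have hq0 : 0 ≤ q := Real.exp_nonneg _
  have hq1 : q < 1 := by
    rw [hq, Real.exp_lt_one_iff, neg_div]
    simp only [Left.neg_neg_iff]
    positivity
  set C : ℝ := Real.exp (-3 / a) - Real.exp (3 / a - Real.pi / (h * a)) with hC
  have hterm : ∀ k : ℕ, Real.exp (-(1/h * l k)) - Real.exp (-(1/h * u k)) = C * q ^ k := by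
    intro k
    have e1 : Real.exp (-(1/h * l k)) = Real.exp (-3 / a) * q ^ k := by
      rw [hq, ← Real.exp_nat_mul, ← Real.exp_add]
      congr 1
      simp only [hl]
      field_simp
      ring
    have e2 : Real.exp (-(1/h * u k)) = Real.exp (3 / a - Real.pi / (h * a)) * q ^ k := by
      rw [hq, ← Real.exp_nat_mul, ← Real.exp_add]
      congr 1
      simp only [hu]
      field_simp
      ring
    rw [e1, e2, hC]; ring
  have hπha : 6 / a < Real.pi / (h * a) := by
    rw [div_lt_div_iff₀ ha0 (by positivity)]
    nlinarith [mul_lt_mul_of_pos_right h6 ha0]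
  have hC0 : 0 < C := by
    rw [hC, sub_pos, Real.exp_lt_exp]
    have e1 : (-3:ℝ)/a = -(3/a) := by ring
    have e2 : (6:ℝ)/a = 2 * (3/a) := by ring
    rw [e1]
    linarith [hπha, e2]
  have hmeas : expMeasure (1/h) Sᶜ = ENNReal.ofReal (C / (1 - q)) := by
    rw [hset, my_measure_union_null hnull,
      measure_iUnion hdisj (fun k => measurableSet_Ioo)]
    have hterms : ∀ k : ℕ, expMeasure (1/h) (Set.Ioo (l k) (u k))
        = ENNReal.ofReal (C * q ^ k) := by
      intro k
      rw [expMeasure_Ioo hr (by simp only [hl]; positivity) (hlu k), hterm k]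
    simp_rw [hterms]
    rw [← ENNReal.ofReal_tsum_of_nonneg (fun k => by positivity)
      ((summable_geometric_of_lt_one hq0 hq1).mul_left C)]
    rw [tsum_mul_left, tsum_geometric_of_lt_one hq0 hq1, div_eq_mul_inv]
  constructor
  · exact hmeas
  · rw [hmeas]
    apply ENNReal.ofReal_le_ofReal
    have h1q : 0 < 1 - q := by linarith
    rw [div_le_div_iff₀ two_pos h1q]
    set e : ℝ := Real.exp (-3 / a) with he
    have he0 : 0 < e := Real.exp_pos _
    have he1 : e ≤ 1 := by
      rw [he, Real.exp_le_one_iff, neg_div]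
      simp only [Left.neg_nonpos_iff]
      positivity
    have hec : Real.exp (-3 / c₃) ≤ e := by
      rw [he, Real.exp_le_exp, neg_div, neg_div, neg_le_neg_iff]
      exact div_le_div_of_nonneg_left (by norm_num) hc₃ ha
    have hq4 : q ≤ e ^ 4 := by
      rw [hq, he, ← Real.exp_nat_mul, Real.exp_le_exp]
      have e3 : (4:ℕ) * ((-3:ℝ)/a) = -(12/a) := by push_cast; ring
      have e4 : -Real.pi/(h*a) = -(Real.pi/(h*a)) := by ring
      have h12 : 12 / a ≤ Real.pi / (h * a) := by
        rw [div_le_div_iff₀ ha0 (by positivity)]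
        nlinarith [mul_lt_mul_of_pos_right h6 ha0, mul_pos hh ha0]
      rw [e3, e4]
      linarith
    have hqe : q / e = Real.exp (3 / a - Real.pi / (h * a)) := by
      rw [hq, he, ← Real.exp_sub]
      congr 1
      ring
    have hC2 : C = e - q / e := by rw [hC, he, hqe]
    rw [hC2]
    have key : e * ((e - q / e) * 2) = 2 * (e ^ 2 - q) := by
      field_simp
    have hgoal : e * (Real.exp (-3 / c₃) * (1 - q)) ≤ e * ((e - q / e) * 2) := by
      rw [key]
      have hstep1 : Real.exp (-3 / c₃) * (e * (1 - q)) ≤ e * (e * (1 - q)) :=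
        mul_le_mul_of_nonneg_right hec (mul_nonneg he0.le h1q.le)
      have h2e : 0 ≤ 2 - e ^ 2 := by nlinarith
      have hstep2 : e ^ 4 * (2 - e ^ 2) ≤ e ^ 2 := by nlinarith [sq_nonneg (e * (e ^ 2 - 1))]
      have hstep3 : q * (2 - e ^ 2) ≤ e ^ 4 * (2 - e ^ 2) :=
        mul_le_mul_of_nonneg_right hq4 h2e
      nlinarith [hstep1, hstep2, hstep3]
    exact le_of_mul_le_mul_left hgoal he0
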